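/- Define polynomials P_q by P_2(z) = 1 and P_q(z) = P_{q-1}(z) + z·∑_{ℓ=2}^{q-2} P_ℓ(z)·P_{q-ℓ}(z) for q ≥ 3. Then for all q ≥ 2, the generating function M_q(z) of Motzkin trees with exactly q unary nodes satisfies M_q(z) = z^{q+1}·P_q(z^2) / (1 - 4z^2)^{q - 1/2} as formal power series (where (1-4z^2)^{-(q-1/2)} is interpreted via the formal binomial series). -/

import Mathlib

open PowerSeries Polynomial

inductive MotzkinTree : Type
  | leaf : MotzkinTree
  | unary : MotzkinTree → MotzkinTree
  | binary : MotzkinTree → MotzkinTree → MotzkinTree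

namespace MotzkinTree

def size : MotzkinTree → ℕ
  | leaf => 1
  | unary t => 1 + t.size
  | binary l r => 1 + l.size + r.size

def unaries : MotzkinTree → ℕ
  | leaf => 0
  | unary t => 1 + t.unaries
  | binary l r => l.unaries + r.unaries

end MotzkinTree

noncomputable def motzkinGF (q : ℕ) : PowerSeries ℚ :=
  PowerSeries.mk fun n =>
    (Nat.card {t : MotzkinTree // t.size = n ∧ t.unaries = q} : ℚ)

namespace MotzkinAux

open MotzkinTree

/-- preorder encoding of a Motzkin tree -/
def enc : MotzkinTree → List (Fin 3)
  | .leaf => [0]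
  | .unary t => 1 :: enc t
  | .binary l r => 2 :: (enc l ++ enc r)

lemma enc_decode : ∀ t1 t2 : MotzkinTree, ∀ l1 l2 : List (Fin 3),
    enc t1 ++ l1 = enc t2 ++ l2 → t1 = t2 ∧ l1 = l2 := by
  intro t1
  induction t1 with
  | leaf =>
    intro t2 l1 l2 h
    cases t2 <;> simp [enc] at h <;> simp [h]
  | unary s ih =>
    intro t2 l1 l2 h
    cases t2 <;> simp [enc] at h
    · obtain ⟨h1, h2⟩ := ih _ _ _ h
      simp [h1, h2]
  | binary a b iha ihb =>
    intro t2 l1 l2 h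
    cases t2 with
    | leaf => simp [enc] at h
    | unary s => simp [enc] at h
    | binary c d =>
      simp only [enc, List.cons_append, List.cons.injEq, List.append_assoc] at h
      obtain ⟨-, h⟩ := h
      obtain ⟨h1, h2⟩ := iha _ _ _ h
      obtain ⟨h3, h4⟩ := ihb _ _ _ h2
      simp [h1, h3, h4]

lemma enc_injective : Function.Injective enc := fun t1 t2 h =>
  (enc_decode t1 t2 [] [] (by simp [h])).1

lemma length_enc : ∀ t : MotzkinTree, (enc t).length = t.size := by
  intro t
  induction t <;> simp [enc, size, *] <;> omega

lemma size_pos (t : MotzkinTree) : 1 ≤ t.size := by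
  cases t <;> simp [size] <;> omega

instance finite_size (n : ℕ) : Finite {t : MotzkinTree // t.size = n} := by
  haveI : Finite {l : List (Fin 3) // l.length = n} :=
    inferInstanceAs (Finite (List.Vector (Fin 3) n))
  apply Finite.of_injective
    (fun t : {t : MotzkinTree // t.size = n} =>
      (⟨enc t.1, by rw [length_enc, t.2]⟩ : {l : List (Fin 3) // l.length = n}))
  intro a b h
  simp only [Subtype.mk.injEq] at h
  exact Subtype.ext (enc_injective h)

instance finite_su (n q : ℕ) : Finite {t : MotzkinTree // t.size = n ∧ t.unaries = q} := by
  apply Finite.of_injective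
    (fun t : {t : MotzkinTree // t.size = n ∧ t.unaries = q} =>
      (⟨t.1, t.2.1⟩ : {t : MotzkinTree // t.size = n}))
  intro a b h
  simp only [Subtype.mk.injEq] at h
  exact Subtype.ext h

instance finite_pair (n q : ℕ) : Finite {p : MotzkinTree × MotzkinTree //
    p.1.size + p.2.size = n ∧ p.1.unaries + p.2.unaries = q} := by
  apply Finite.of_injective (fun p =>
    (⟨MotzkinTree.binary p.1.1 p.1.2, by simp [size, unaries]; omega,
      by simp [size, unaries]; omega⟩ :
      {t : MotzkinTree // t.size = n + 1 ∧ t.unaries = q}))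
  rintro ⟨⟨a, b⟩, h⟩ ⟨⟨c, d⟩, h'⟩ hab
  simp only [Subtype.mk.injEq, MotzkinTree.binary.injEq] at hab
  simp [Prod.ext_iff, hab.1, hab.2]

instance finite_su' (n q : ℕ) : Finite {t : MotzkinTree // t.size = n ∧ 1 + t.unaries = q} := by
  apply Finite.of_injective
    (fun t : {t : MotzkinTree // t.size = n ∧ 1 + t.unaries = q} =>
      (⟨t.1, t.2.1⟩ : {t : MotzkinTree // t.size = n}))
  intro a b h
  simp only [Subtype.mk.injEq] at h
  exact Subtype.ext h

/-- number of Motzkin trees of size n with q unaries -/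
noncomputable def C (n q : ℕ) : ℕ :=
  Nat.card {t : MotzkinTree // t.size = n ∧ t.unaries = q}

/-- decomposition at the root -/
def eqv (n q : ℕ) : {t : MotzkinTree // t.size = n + 1 ∧ t.unaries = q} ≃
    ({_u : Unit // n = 0 ∧ q = 0} ⊕
      ({t : MotzkinTree // t.size = n ∧ 1 + t.unaries = q} ⊕
      {p : MotzkinTree × MotzkinTree //
        p.1.size + p.2.size = n ∧ p.1.unaries + p.2.unaries = q})) where
  toFun := fun ⟨t, h⟩ =>
    match t, h with
    | .leaf, h => Sum.inl ⟨(), by simp [size, unaries] at h; omega⟩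
    | .unary s, h => Sum.inr (Sum.inl ⟨s, by simp [size, unaries] at h; omega⟩)
    | .binary l r, h => Sum.inr (Sum.inr ⟨(l, r), by
        refine ⟨show l.size + r.size = n from ?_, show l.unaries + r.unaries = q from ?_⟩ <;>
          simp [size, unaries] at h <;> omega⟩)
  invFun := fun x =>
    match x with
    | Sum.inl ⟨_, h⟩ => ⟨.leaf, by simp [size, unaries]; omega⟩
    | Sum.inr (Sum.inl ⟨s, h⟩) => ⟨.unary s, by simp [size, unaries]; omega⟩
    | Sum.inr (Sum.inr ⟨(l, r), h⟩) => ⟨.binary l r, by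
        have h1 : l.size + r.size = n := h.1
        have h2 : l.unaries + r.unaries = q := h.2
        simp [size, unaries]
        omega⟩
  left_inv := fun ⟨t, h⟩ => by cases t <;> rfl
  right_inv := fun x => by
    rcases x with ⟨⟨⟩, h⟩ | (⟨s, h⟩ | ⟨⟨l, r⟩, h⟩) <;> rfl

lemma nat_card_sigma {ι : Type*} [Fintype ι] {f : ι → Type*} [∀ i, Finite (f i)] :
    Nat.card (Σ i, f i) = ∑ i, Nat.card (f i) := by
  have := fun i => Fintype.ofFinite (f i)
  simp_rw [Nat.card_eq_fintype_card, Fintype.card_sigma]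

/-- decomposition of a pair of trees by (unaries of first, sizes) -/
def binEquiv (n q : ℕ) :
    {p : MotzkinTree × MotzkinTree //
        p.1.size + p.2.size = n ∧ p.1.unaries + p.2.unaries = q} ≃
    (Σ x : (Finset.range (q+1) ×ˢ Finset.HasAntidiagonal.antidiagonal n : Finset (ℕ × ℕ × ℕ)),
      ({t : MotzkinTree // t.size = x.1.2.1 ∧ t.unaries = x.1.1} ×
       {t : MotzkinTree // t.size = x.1.2.2 ∧ t.unaries = q - x.1.1})) where
  toFun := fun p =>
    ⟨⟨(p.1.1.unaries, (p.1.1.size, p.1.2.size)), by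
        have h := p.2
        simp only [Finset.mem_product, Finset.mem_range, Finset.HasAntidiagonal.mem_antidiagonal]
        omega⟩,
      (⟨p.1.1, rfl, rfl⟩, ⟨p.1.2, rfl, by
        show p.1.2.unaries = q - p.1.1.unaries
        have h := p.2
        omega⟩)⟩
  invFun := fun x =>
    ⟨(x.2.1.1, x.2.2.1), by
      have hx := x.1.2
      have h1 : x.2.1.1.size = x.1.1.2.1 := x.2.1.2.1
      have h1' : x.2.1.1.unaries = x.1.1.1 := x.2.1.2.2
      have h2 : x.2.2.1.size = x.1.1.2.2 := x.2.2.2.1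
      have h2' : x.2.2.1.unaries = q - x.1.1.1 := x.2.2.2.2
      simp only [Finset.mem_product, Finset.mem_range, Finset.HasAntidiagonal.mem_antidiagonal] at hx
      refine ⟨show x.2.1.1.size + x.2.2.1.size = n from ?_,
        show x.2.1.1.unaries + x.2.2.1.unaries = q from ?_⟩ <;> omega⟩
  left_inv := fun p => rfl
  right_inv := fun x => by
    rcases x with ⟨⟨⟨ℓ, i, j⟩, hx⟩, ⟨⟨t1, ht1⟩, ⟨t2, ht2⟩⟩⟩
    obtain ⟨ht1, ht1'⟩ : t1.size = i ∧ t1.unaries = ℓ := ht1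
    obtain ⟨ht2, ht2'⟩ : t2.size = j ∧ t2.unaries = q - ℓ := ht2
    subst ht1 ht1' ht2
    rfl

lemma card_bin (n q : ℕ) :
    Nat.card {p : MotzkinTree × MotzkinTree //
        p.1.size + p.2.size = n ∧ p.1.unaries + p.2.unaries = q} =
    ∑ ℓ ∈ Finset.range (q+1), ∑ ij ∈ Finset.HasAntidiagonal.antidiagonal n,
      C ij.1 ℓ * C ij.2 (q - ℓ) := by
  rw [Nat.card_congr (binEquiv n q), nat_card_sigma]
  rw [← Finset.sum_product']
  rw [← Finset.sum_coe_sort (Finset.range (q+1) ×ˢ Finset.HasAntidiagonal.antidiagonal n)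
    (fun y => C y.2.1 y.1 * C y.2.2 (q - y.1))]
  apply Finset.sum_congr rfl
  intro x _
  rw [Nat.card_prod]
  rfl

lemma card_rec (n q : ℕ) :
    C (n+1) q = (if n = 0 ∧ q = 0 then 1 else 0) +
      (if q = 0 then 0 else C n (q-1)) +
      ∑ ℓ ∈ Finset.range (q+1), ∑ ij ∈ Finset.HasAntidiagonal.antidiagonal n,
        C ij.1 ℓ * C ij.2 (q - ℓ) := by
  have h1 : Nat.card {_u : Unit // n = 0 ∧ q = 0} =
      (if n = 0 ∧ q = 0 then 1 else 0) := by
    split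
    · next h => rw [Nat.card_congr (Equiv.subtypeUnivEquiv fun _ => h)]; simp
    · next h =>
        haveI : IsEmpty {_u : Unit // n = 0 ∧ q = 0} := ⟨fun u => h u.2⟩
        exact Nat.card_of_isEmpty
  have h2 : Nat.card {t : MotzkinTree // t.size = n ∧ 1 + t.unaries = q} =
      (if q = 0 then 0 else C n (q-1)) := by
    match q with
    | 0 =>
      simp only [if_pos rfl]
      have : IsEmpty {t : MotzkinTree // t.size = n ∧ 1 + t.unaries = 0} :=
        ⟨fun t => by omega⟩
      exact Nat.card_of_isEmpty
    | Nat.succ s =>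
      simp only [Nat.succ_ne_zero, if_false, Nat.succ_sub_one]
      exact Nat.card_congr (Equiv.subtypeEquivRight fun t => by constructor <;> rintro ⟨h, h'⟩ <;>
        exact ⟨h, by omega⟩)
  rw [show C (n+1) q = Nat.card {t : MotzkinTree // t.size = n + 1 ∧ t.unaries = q} from rfl,
    Nat.card_congr (eqv n q), Nat.card_sum, Nat.card_sum, h1, h2, card_bin, add_assoc]


lemma coeff_motzkinGF (n q : ℕ) : (PowerSeries.coeff n) (motzkinGF q) = (C n q : ℚ) :=
  PowerSeries.coeff_mk _ _

lemma C_zero (q : ℕ) : C 0 q = 0 := by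
  haveI : IsEmpty {t : MotzkinTree // t.size = 0 ∧ t.unaries = q} :=
    ⟨fun t => by have := size_pos t.1; omega⟩
  exact Nat.card_of_isEmpty

lemma motzkin_eq (q : ℕ) :
    motzkinGF q = (if q = 0 then PowerSeries.X else PowerSeries.X * motzkinGF (q-1)) +
      PowerSeries.X * ∑ ℓ ∈ Finset.range (q+1), motzkinGF ℓ * motzkinGF (q - ℓ) := by
  ext n
  rw [map_add]
  cases n with
  | zero =>
    rw [coeff_motzkinGF, C_zero]
    simp only [PowerSeries.coeff_zero_eq_constantCoeff, map_mul, PowerSeries.constantCoeff_X,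
      zero_mul, Nat.cast_zero]
    split <;> simp [PowerSeries.constantCoeff_X]
  | succ n =>
    rw [coeff_motzkinGF, card_rec, PowerSeries.coeff_succ_X_mul, map_sum]
    have hterm : ∀ ℓ, (PowerSeries.coeff n) (motzkinGF ℓ * motzkinGF (q - ℓ)) =
        ∑ ij ∈ Finset.HasAntidiagonal.antidiagonal n, (C ij.1 ℓ * C ij.2 (q - ℓ) : ℚ) := by
      intro ℓ
      rw [PowerSeries.coeff_mul]
      exact Finset.sum_congr rfl fun ij _ => by
        rw [coeff_motzkinGF, coeff_motzkinGF]
    rw [Finset.sum_congr rfl fun ℓ _ => hterm ℓ]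
    rcases Nat.eq_zero_or_pos q with hq | hq
    · subst hq
      rw [if_pos rfl, if_pos rfl, PowerSeries.coeff_X]
      push_cast
      rcases Nat.eq_zero_or_pos n with hn | hn
      · subst hn; simp
      · rw [if_neg (by omega), if_neg (by omega)]
        push_cast
        ring
    · rw [if_neg (by omega), if_neg (by omega), if_neg (by omega),
        PowerSeries.coeff_succ_X_mul, coeff_motzkinGF]
      push_cast
      ring

/-- the three structural equations -/
lemma M0_eq : motzkinGF 0 = PowerSeries.X + PowerSeries.X * (motzkinGF 0 * motzkinGF 0) := by
  have h := motzkin_eq 0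
  simpa using h

lemma Mq_rec (q : ℕ) (hq : 1 ≤ q) :
    motzkinGF q * (1 - 2 * PowerSeries.X * motzkinGF 0) =
      PowerSeries.X * motzkinGF (q-1) +
      PowerSeries.X * ∑ ℓ ∈ Finset.Icc 1 (q-1), motzkinGF ℓ * motzkinGF (q - ℓ) := by
  have h := motzkin_eq q
  rw [if_neg (by omega)] at h
  have hsplit : Finset.range (q+1) = insert 0 (insert q (Finset.Icc 1 (q-1))) := by
    ext x; simp; omega
  rw [hsplit, Finset.sum_insert (by simp; omega), Finset.sum_insert (by simp; omega)] at h
  simp only [Nat.sub_zero, Nat.sub_self] at h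
  linear_combination h

lemma M1_eq : motzkinGF 1 * (1 - 2 * PowerSeries.X * motzkinGF 0) =
    PowerSeries.X * motzkinGF 0 := by
  have h := Mq_rec 1 le_rfl
  simpa using h


lemma S_eq (S : PowerSeries ℚ) (hS : S ^ 2 = 1 - 4 * PowerSeries.X ^ 2)
    (hS0 : PowerSeries.constantCoeff (R := ℚ) S = 1) :
    S = 1 - 2 * PowerSeries.X * motzkinGF 0 := by
  have h0 := M0_eq
  have h2 : (1 - 2 * PowerSeries.X * motzkinGF 0) ^ 2 = 1 - 4 * PowerSeries.X ^ 2 := by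
    linear_combination (-4 * PowerSeries.X) * h0
  have h3 : (S - (1 - 2 * PowerSeries.X * motzkinGF 0)) *
      (S + (1 - 2 * PowerSeries.X * motzkinGF 0)) = 0 := by
    linear_combination hS - h2
  rcases mul_eq_zero.mp h3 with h | h
  · exact sub_eq_zero.mp h
  · exfalso
    have hc := congrArg (PowerSeries.constantCoeff (R := ℚ)) h
    simp only [map_add, map_sub, map_mul, map_one, map_zero, hS0,
      PowerSeries.constantCoeff_X, mul_zero, zero_mul, map_ofNat] at hc
    norm_num at hc

end MotzkinAux

/-- For any family of polynomials `P` satisfying the stated recurrence, and any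
formal square root `S` of `1 - 4z²` with constant term `1` (so that
`(1-4z²)^{q-1/2} = (1-4z²)^q / S`), we have
`M_q(z) = z^{q+1} P_q(z²) / (1-4z²)^{q-1/2}`, i.e.
`M_q(z) · (1-4z²)^q = z^{q+1} · P_q(z²) · S`. -/
theorem motzkinGF_closed_form
    (P : ℕ → Polynomial ℚ)
    (hP2 : P 2 = 1)
    (hPrec : ∀ q : ℕ, 3 ≤ q →
      P q = P (q - 1) +
        Polynomial.X * ∑ ℓ ∈ Finset.Icc 2 (q - 2), P ℓ * P (q - ℓ))
    (S : PowerSeries ℚ)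
    (hS : S ^ 2 = 1 - 4 * PowerSeries.X ^ 2)
    (hS0 : PowerSeries.constantCoeff (R := ℚ) S = 1) :
    ∀ q : ℕ, 2 ≤ q →
      motzkinGF q * (1 - 4 * PowerSeries.X ^ 2) ^ q =
        PowerSeries.X ^ (q + 1) *
          Polynomial.aeval (PowerSeries.X ^ 2 : PowerSeries ℚ) (P q) * S := by
  have hM0 := MotzkinAux.M0_eq
  have hSeq : S = 1 - 2 * PowerSeries.X * motzkinGF 0 := MotzkinAux.S_eq S hS hS0
  have hSne : S ≠ 0 := fun h => by rw [h, map_zero] at hS0; exact one_ne_zero hS0.symm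
  have h1 : motzkinGF 1 * S = PowerSeries.X * motzkinGF 0 := by
    rw [hSeq]; exact MotzkinAux.M1_eq
  have hrec : ∀ p : ℕ, 1 ≤ p → motzkinGF p * S =
      PowerSeries.X * motzkinGF (p-1) +
      PowerSeries.X * ∑ ℓ ∈ Finset.Icc 1 (p-1), motzkinGF ℓ * motzkinGF (p - ℓ) := by
    intro p hp; rw [hSeq]; exact MotzkinAux.Mq_rec p hp
  suffices H : ∀ q : ℕ, 2 ≤ q → motzkinGF q * (S ^ 2) ^ q =
      PowerSeries.X ^ (q + 1) *
        Polynomial.aeval (PowerSeries.X ^ 2 : PowerSeries ℚ) (P q) * S by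
    intro q hq
    rw [← hS]
    exact H q hq
  intro q
  induction q using Nat.strong_induction_on with
  | _ q IH =>
  intro hq
  rcases eq_or_lt_of_le hq with hq2 | hq3
  · -- base case q = 2
    subst hq2
    have h2 : motzkinGF 2 * S = PowerSeries.X * motzkinGF 1 +
        PowerSeries.X * (motzkinGF 1 * motzkinGF 1) := by
      have h := hrec 2 (by norm_num)
      simpa using h
    rw [hP2, map_one, mul_one]
    apply mul_left_cancel₀ hSne
    linear_combination (S^4) * h2 +
      (PowerSeries.X * S^3 + PowerSeries.X * S^2 * (motzkinGF 1 * S + PowerSeries.X * motzkinGF 0)) * h1 +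
      (PowerSeries.X^2 * motzkinGF 0 * S + PowerSeries.X^3 * (motzkinGF 0)^2 - PowerSeries.X^3) * hS +
      ((1 - 4*PowerSeries.X^2) * PowerSeries.X^2 * motzkinGF 0) * hSeq +
      ((1 - 4*PowerSeries.X^2) * PowerSeries.X^2) * hM0
  · -- induction step q ≥ 3
    obtain ⟨r, rfl⟩ : ∃ r, q = r + 1 := ⟨q - 1, by omega⟩
    have hr2 : 2 ≤ r := by omega
    have hrecq := hrec (r+1) (by omega)
    have hsplit : Finset.Icc 1 ((r+1)-1) = insert 1 (insert r (Finset.Icc 2 (r-1))) := by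
      ext x; simp; omega
    rw [hsplit, Finset.sum_insert (by simp; omega), Finset.sum_insert (by simp; omega)] at hrecq
    simp only [Nat.add_sub_cancel, show r+1-r = 1 by omega] at hrecq
    have IHr := IH r (by omega) hr2
    have key : ∀ ℓ ∈ Finset.Icc 2 (r-1),
        motzkinGF ℓ * motzkinGF (r+1-ℓ) * ((S^2)^r * S^2) =
        PowerSeries.X^(r+1) * PowerSeries.X^2 *
          (Polynomial.aeval (PowerSeries.X ^ 2 : PowerSeries ℚ) (P ℓ * P (r+1-ℓ))) * S^2 := by
      intro ℓ hℓ
      simp only [Finset.mem_Icc] at hℓ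
      have IH1 := IH ℓ (by omega) (by omega)
      have IH2 := IH (r+1-ℓ) (by omega) (by omega)
      have e1 : ((S^2 : PowerSeries ℚ))^r * S^2 = (S^2)^ℓ * (S^2)^(r+1-ℓ) := by
        rw [← pow_succ, ← pow_add]; congr 1; omega
      have e2 : (PowerSeries.X : PowerSeries ℚ)^(r+1) * PowerSeries.X^2 =
          PowerSeries.X^(ℓ+1) * PowerSeries.X^((r+1-ℓ)+1) := by
        rw [← pow_add, ← pow_add]; congr 1; omega
      calc motzkinGF ℓ * motzkinGF (r+1-ℓ) * ((S^2)^r * S^2)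
          = (motzkinGF ℓ * (S^2)^ℓ) * (motzkinGF (r+1-ℓ) * (S^2)^(r+1-ℓ)) := by
            rw [e1]; ring
        _ = (PowerSeries.X^(ℓ+1) * Polynomial.aeval (PowerSeries.X ^ 2 : PowerSeries ℚ) (P ℓ) * S) *
            (PowerSeries.X^((r+1-ℓ)+1) * Polynomial.aeval (PowerSeries.X ^ 2 : PowerSeries ℚ) (P (r+1-ℓ)) * S) := by
            rw [IH1, IH2]
        _ = PowerSeries.X^(r+1) * PowerSeries.X^2 *
            (Polynomial.aeval (PowerSeries.X ^ 2 : PowerSeries ℚ) (P ℓ * P (r+1-ℓ))) * S^2 := by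
            rw [map_mul, e2]; ring
    have hsum : (∑ ℓ ∈ Finset.Icc 2 (r-1), motzkinGF ℓ * motzkinGF (r+1-ℓ)) * ((S^2)^r * S^2) =
        PowerSeries.X^(r+1) * PowerSeries.X^2 *
          (Polynomial.aeval (PowerSeries.X ^ 2 : PowerSeries ℚ)
            (∑ ℓ ∈ Finset.Icc 2 (r-1), P ℓ * P (r+1-ℓ))) * S^2 := by
      rw [Finset.sum_mul, Finset.sum_congr rfl key, map_sum, Finset.mul_sum, Finset.sum_mul]
    have hP : Polynomial.aeval (PowerSeries.X ^ 2 : PowerSeries ℚ) (P (r+1)) =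
        Polynomial.aeval (PowerSeries.X ^ 2 : PowerSeries ℚ) (P r) +
        PowerSeries.X^2 * Polynomial.aeval (PowerSeries.X ^ 2 : PowerSeries ℚ)
          (∑ ℓ ∈ Finset.Icc 2 (r-1), P ℓ * P (r+1-ℓ)) := by
      rw [hPrec (r+1) (by omega)]
      simp only [Nat.add_sub_cancel, show r+1-2 = r-1 by omega, map_add, map_mul, Polynomial.aeval_X]
    apply mul_left_cancel₀ hSne
    rw [pow_succ (S^2) r, pow_succ PowerSeries.X (r+1)]
    linear_combination ((S^2)^r * S^2) * hrecq +
      (PowerSeries.X * S^2 + 2 * PowerSeries.X * (motzkinGF 1) * S^2) * IHr +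
      (2 * PowerSeries.X * PowerSeries.X^(r+1) *
        (Polynomial.aeval (PowerSeries.X ^ 2 : PowerSeries ℚ) (P r)) * S^2) * h1 +
      PowerSeries.X * hsum +
      (PowerSeries.X * PowerSeries.X^(r+1) *
        (Polynomial.aeval (PowerSeries.X ^ 2 : PowerSeries ℚ) (P r)) * S^2) * hSeq -
      (PowerSeries.X * PowerSeries.X^(r+1) * S^2) * hP
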